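/- arXiv:math/0011238 — 3 statements merged into one kernel-verified Lean document; each statement's English description precedes it below -/
import Mathlib

section
/- For every positive integer n there is a function φ : [0,∞) → [0,∞) with the following property. Let Λ = (l_{ij}) and Λ' = (l'_{ij}) be n×n real lower-triangular matrices with 1's on the diagonal such that every nonzero off-diagonal entry of Λ or Λ' lies on the subdiagonal (i.e. if l_{ij} ≠ 0 or l'_{ij} ≠ 0 then i = j or i = j+1), and such that l_{j+1,j}·l'_{j+1,j} = 0 for all j. Let U and U' be n×n real upper-triangular matrices with 1's on the diagonal, and let R ≥ 0. If some entry of Λ or of Λ' has absolute value greater than φ(R), then some entry of the matrix S = (UΛ)⁻¹(U'Λ') has absolute value greater than R. -/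
open Matrix Finset

private lemma det_abs_le {n : ℕ} (M : Matrix (Fin n) (Fin n) ℝ) (C : ℝ) (hC : 0 ≤ C)
    (h : ∀ i j, |M i j| ≤ C) : |M.det| ≤ (n.factorial : ℝ) * C ^ n := by
  rw [Matrix.det_apply]
  refine le_trans (Finset.abs_sum_le_sum_abs _ _) ?_
  have hb : ∀ σ : Equiv.Perm (Fin n), |Equiv.Perm.sign σ • ∏ i, M (σ i) i| ≤ C ^ n := by
    intro σ
    have hp : |∏ i, M (σ i) i| ≤ C ^ n := by
      rw [Finset.abs_prod]
      calc ∏ i, |M (σ i) i| ≤ ∏ _i : Fin n, C :=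
            Finset.prod_le_prod (fun i _ => abs_nonneg _) (fun i _ => h _ _)
        _ = C ^ n := by simp
    rcases Int.units_eq_one_or (Equiv.Perm.sign σ) with hs | hs <;>
      simp [hs] <;> linarith [hp, abs_nonneg (∏ i, M (σ i) i)]
  refine le_trans (Finset.sum_le_sum fun σ _ => hb σ) ?_
  rw [Finset.sum_const, Finset.card_univ, Fintype.card_perm, nsmul_eq_mul]
  simp

private lemma upper_tri_inv {n : ℕ} (W : Matrix (Fin n) (Fin n) ℝ)
    (hd : ∀ i, W i i = 1) (hu : ∀ i j : Fin n, j < i → W i j = 0) :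
    W.det = 1 ∧ (∀ i j : Fin n, j < i → W⁻¹ i j = 0) ∧ (∀ i, W⁻¹ i i = 1) := by
  have hbt : W.BlockTriangular id := fun i j hij => hu i j hij
  have hdet : W.det = 1 := by
    rw [Matrix.det_of_upperTriangular hbt]; simp [hd]
  have hunit : IsUnit W.det := by rw [hdet]; exact isUnit_one
  have : Invertible W := W.invertibleOfIsUnitDet hunit
  have hbt' : W⁻¹.BlockTriangular id := Matrix.blockTriangular_inv_of_blockTriangular hbt
  refine ⟨hdet, fun i j hij => hbt' hij, fun i => ?_⟩
  have h1 : (W⁻¹ * W) i i = 1 := by rw [Matrix.nonsing_inv_mul W hunit]; simp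
  have h2 : ∀ k ∈ Finset.univ, k ≠ i → W⁻¹ i k * W k i = 0 := by
    intro k _ hk
    rcases lt_or_gt_of_ne hk with hlt | hgt
    · rw [hbt' hlt, zero_mul]
    · rw [hu k i hgt, mul_zero]
  rw [Matrix.mul_apply, Finset.sum_eq_single i h2 (by simp), hd i, mul_one] at h1
  exact h1

private lemma lower_det {n : ℕ} (Λ : Matrix (Fin n) (Fin n) ℝ)
    (hΛd : ∀ i, Λ i i = 1)
    (hΛs : ∀ i j : Fin n, i ≠ j → Λ i j ≠ 0 → (i : ℕ) = (j : ℕ) + 1) : Λ.det = 1 := by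
  have hlow : Λ.BlockTriangular OrderDual.toDual := by
    intro p q h
    have hpq : p < q := h
    by_contra hne
    have h1 := hΛs p q (ne_of_lt hpq) hne
    rw [Fin.lt_def] at hpq
    omega
  rw [Matrix.det_of_lowerTriangular Λ hlow]; simp [hΛd]

private lemma key_entry {n : ℕ} (Λ Λ' U U' : Matrix (Fin n) (Fin n) ℝ)
    (hΛd : ∀ i, Λ i i = 1) (hΛ'd : ∀ i, Λ' i i = 1)
    (hΛs : ∀ i j : Fin n, i ≠ j → Λ i j ≠ 0 → (i : ℕ) = (j : ℕ) + 1)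
    (hΛ's : ∀ i j : Fin n, i ≠ j → Λ' i j ≠ 0 → (i : ℕ) = (j : ℕ) + 1)
    (hUd : ∀ i, U i i = 1) (hUu : ∀ i j : Fin n, j < i → U i j = 0)
    (hU'd : ∀ i, U' i i = 1) (hU'u : ∀ i j : Fin n, j < i → U' i j = 0)
    (i j : Fin n) (hij : (i : ℕ) = (j : ℕ) + 1) :
    ((U * Λ)⁻¹ * (U' * Λ')) i j + Λ i j * ((U * Λ)⁻¹ * (U' * Λ')) j j = Λ' i j := by
  obtain ⟨hUdet, hUinv0, hUinv1⟩ := upper_tri_inv U hUd hUu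
  have hji : j < i := by rw [Fin.lt_def]; omega
  have hne : i ≠ j := by
    intro h; rw [h] at hij; omega
  set S := (U * Λ)⁻¹ * (U' * Λ') with hS
  have hΛunit : IsUnit Λ.det := by rw [lower_det Λ hΛd hΛs]; exact isUnit_one
  have e1 : Λ * S = (U⁻¹ * U') * Λ' := by
    rw [hS, Matrix.mul_inv_rev, Matrix.mul_assoc Λ⁻¹,
      Matrix.mul_nonsing_inv_cancel_left _ _ hΛunit, ← Matrix.mul_assoc]
  have e1' : (Λ * S) i j = ((U⁻¹ * U') * Λ') i j := by rw [e1]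
  have lhs : (Λ * S) i j = S i j + Λ i j * S j j := by
    rw [Matrix.mul_apply]
    have hvan : ∀ l ∈ Finset.univ, l ∉ ({i, j} : Finset (Fin n)) → Λ i l * S l j = 0 := by
      intro l _ hl
      simp only [Finset.mem_insert, Finset.mem_singleton, not_or] at hl
      have h0 : Λ i l = 0 := by
        by_contra h
        have := hΛs i l (Ne.symm hl.1) h
        exact hl.2 (Fin.ext (by omega))
      rw [h0, zero_mul]
    rw [← Finset.sum_subset (Finset.subset_univ {i, j}) hvan, Finset.sum_pair hne, hΛd i, one_mul]
  have hV0 : (U⁻¹ * U') i j = 0 := by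
    rw [Matrix.mul_apply]
    refine Finset.sum_eq_zero fun k _ => ?_
    rcases lt_or_ge k i with hk | hk
    · rw [hUinv0 i k hk, zero_mul]
    · rw [hU'u k j (lt_of_lt_of_le hji hk), mul_zero]
  have hV1 : (U⁻¹ * U') i i = 1 := by
    have h2 : ∀ k ∈ Finset.univ, k ≠ i → U⁻¹ i k * U' k i = 0 := by
      intro k _ hk
      rcases lt_or_gt_of_ne hk with hlt | hgt
      · rw [hUinv0 i k hlt, zero_mul]
      · rw [hU'u k i hgt, mul_zero]
    rw [Matrix.mul_apply, Finset.sum_eq_single i h2 (by simp), hUinv1 i, hU'd i, mul_one]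
  have rhs : ((U⁻¹ * U') * Λ') i j = Λ' i j := by
    rw [Matrix.mul_apply]
    have hvan : ∀ l ∈ Finset.univ, l ∉ ({i, j} : Finset (Fin n)) →
        (U⁻¹ * U') i l * Λ' l j = 0 := by
      intro l _ hl
      simp only [Finset.mem_insert, Finset.mem_singleton, not_or] at hl
      have h0 : Λ' l j = 0 := by
        by_contra h
        have := hΛ's l j hl.2 h
        exact hl.1 (Fin.ext (by omega))
      rw [h0, mul_zero]
    rw [← Finset.sum_subset (Finset.subset_univ {i, j}) hvan, Finset.sum_pair hne,
      hV0, hV1, hΛ'd j, one_mul, mul_one, add_zero]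
  rw [lhs, rhs] at e1'
  exact e1'

/-- For every `n ≥ 1` there is a function `φ : [0,∞) → [0,∞)` such that: whenever
`Λ, Λ'` are lower-triangular with 1's on the diagonal, all nonzero off-diagonal entries on the
subdiagonal, and `Λ_{j+1,j}·Λ'_{j+1,j} = 0` for all `j`, and `U, U'` are upper-triangular with
1's on the diagonal, if some entry of `Λ` or `Λ'` exceeds `φ(R)` in absolute value, then some
entry of `S = (UΛ)⁻¹(U'Λ')` exceeds `R` in absolute value. -/
theorem subdiagonal_divergence (n : ℕ) (hn : 1 ≤ n) :
    ∃ φ : ℝ → ℝ, (∀ x : ℝ, 0 ≤ x → 0 ≤ φ x) ∧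
      ∀ (Λ Λ' U U' : Matrix (Fin n) (Fin n) ℝ) (R : ℝ), 0 ≤ R →
        (∀ i, Λ i i = 1) → (∀ i, Λ' i i = 1) →
        (∀ i j : Fin n, i ≠ j → (Λ i j ≠ 0 ∨ Λ' i j ≠ 0) → (i : ℕ) = (j : ℕ) + 1) →
        (∀ i j : Fin n, (i : ℕ) = (j : ℕ) + 1 → Λ i j * Λ' i j = 0) →
        (∀ i, U i i = 1) → (∀ i j : Fin n, j < i → U i j = 0) →
        (∀ i, U' i i = 1) → (∀ i j : Fin n, j < i → U' i j = 0) →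
        (∃ i j : Fin n, φ R < |Λ i j| ∨ φ R < |Λ' i j|) →
        ∃ i j : Fin n, R < |((U * Λ)⁻¹ * (U' * Λ')) i j| := by
  refine ⟨fun R => (n.factorial : ℝ) * max R 1 ^ n, fun x _ => by positivity, ?_⟩
  rintro Λ Λ' U U' R hR hΛd hΛ'd hsub hprod hUd hUu hU'd hU'u ⟨i0, j0, hbig⟩
  by_contra hcon
  push_neg at hcon
  set S := (U * Λ)⁻¹ * (U' * Λ') with hS
  set C := max R 1 with hC
  have hC1 : (1 : ℝ) ≤ C := le_max_right _ _
  have hC0 : (0 : ℝ) ≤ C := by linarith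
  have hfac : (1 : ℝ) ≤ (n.factorial : ℝ) := by exact_mod_cast Nat.one_le_iff_ne_zero.mpr n.factorial_ne_zero
  have hCn : (1 : ℝ) ≤ C ^ n := one_le_pow₀ hC1
  have hφ1 : (1 : ℝ) ≤ (n.factorial : ℝ) * C ^ n := by nlinarith
  have hφ0 : (0 : ℝ) ≤ (n.factorial : ℝ) * C ^ n := by linarith
  have hφR : R ≤ (n.factorial : ℝ) * C ^ n := by
    have h1 : R ≤ C := le_max_left _ _
    have h2 : C ≤ C ^ n := le_self_pow₀ hC1 (by omega)
    nlinarith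
  have hΛs : ∀ i j : Fin n, i ≠ j → Λ i j ≠ 0 → (i : ℕ) = (j : ℕ) + 1 :=
    fun i j h1 h2 => hsub i j h1 (Or.inl h2)
  have hΛ's : ∀ i j : Fin n, i ≠ j → Λ' i j ≠ 0 → (i : ℕ) = (j : ℕ) + 1 :=
    fun i j h1 h2 => hsub i j h1 (Or.inr h2)
  have hdetUΛ : (U * Λ).det = 1 := by
    rw [Matrix.det_mul, (upper_tri_inv U hUd hUu).1, lower_det Λ hΛd hΛs, one_mul]
  have hdetU'Λ' : (U' * Λ').det = 1 := by
    rw [Matrix.det_mul, (upper_tri_inv U' hU'd hU'u).1, lower_det Λ' hΛ'd hΛ's, one_mul]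
  have hdetS : S.det = 1 := by
    rw [hS, Matrix.det_mul, Matrix.det_nonsing_inv, hdetUΛ, hdetU'Λ']
    simp
  have hSinv : S⁻¹ = S.adjugate := by
    rw [Matrix.inv_def, hdetS]; simp
  have hTbound : ∀ a b : Fin n, |S⁻¹ a b| ≤ (n.factorial : ℝ) * C ^ n := by
    intro a b
    rw [hSinv, Matrix.adjugate_apply]
    refine det_abs_le _ C hC0 fun a' b' => ?_
    rw [Matrix.updateRow_apply]
    split_ifs with h
    · rw [Pi.single_apply]
      split_ifs <;> simp only [abs_one, abs_zero] <;> assumption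
    · exact le_trans (hcon a' b') (le_max_left _ _)
  have hTS : S⁻¹ = (U' * Λ')⁻¹ * (U * Λ) := by
    rw [hS, Matrix.mul_inv_rev, Matrix.nonsing_inv_nonsing_inv _ (by rw [hdetUΛ]; exact isUnit_one)]
  have key : ∀ p q : Fin n, |Λ p q| ≤ (n.factorial : ℝ) * C ^ n ∧ |Λ' p q| ≤ (n.factorial : ℝ) * C ^ n := by
    intro p q
    by_cases hpq : p = q
    · subst hpq
      rw [hΛd p, hΛ'd p, abs_one]
      exact ⟨hφ1, hφ1⟩
    by_cases hsd : (p : ℕ) = (q : ℕ) + 1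
    · have E1 := key_entry Λ Λ' U U' hΛd hΛ'd hΛs hΛ's hUd hUu hU'd hU'u p q hsd
      have E2 := key_entry Λ' Λ U' U hΛ'd hΛd hΛ's hΛs hU'd hU'u hUd hUu p q hsd
      rw [← hTS] at E2
      rw [← hS] at E1
      rcases mul_eq_zero.mp (hprod p q hsd) with h0 | h0
      · refine ⟨by rw [h0, abs_zero]; exact hφ0, ?_⟩
        rw [h0, zero_mul, add_zero] at E1
        rw [← E1]
        exact le_trans (hcon p q) hφR
      · refine ⟨?_, by rw [h0, abs_zero]; exact hφ0⟩
        rw [h0, zero_mul, add_zero] at E2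
        rw [← E2]
        exact hTbound p q
    · have h1 : Λ p q = 0 := by by_contra h; exact hsd (hΛs p q hpq h)
      have h2 : Λ' p q = 0 := by by_contra h; exact hsd (hΛ's p q hpq h)
      rw [h1, h2, abs_zero]
      exact ⟨hφ0, hφ0⟩
  rcases hbig with h | h
  · exact absurd (key i0 j0).1 (not_le.mpr h)
  · exact absurd (key i0 j0).2 (not_le.mpr h)
end

section
/- Let G be a Hausdorff topological group, H a closed subgroup, π : G → G/H the quotient map onto the left coset space, and s : G/H → G a continuous section of π (that is, π ∘ s = id). Let A and B be topological spaces, let α : A → G be a proper continuous map whose range is contained in H, and let β : B → G/H be a proper continuous map. Then the map f : A × B → G defined by f(a,b) = s(β(b)) · α(a) is a proper continuous map. -/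
open Topology Filter


/-- Let `G` be a Hausdorff topological group, `H` a closed subgroup, `s : G/H → G` a continuous
section of the quotient map. If `α : A → G` is a proper map with range in `H` and
`β : B → G/H` is a proper map, then `f(a,b) = s(β b) · α a` is a proper map. -/
theorem proper_section_product
    (G : Type*) [Group G] [TopologicalSpace G] [IsTopologicalGroup G] [T2Space G]
    (H : Subgroup G) (hH : IsClosed (H : Set G))
    (s : G ⧸ H → G) (hs_cont : Continuous s)
    (hs_sect : ∀ q : G ⧸ H, QuotientGroup.mk (s q) = q)
    (A B : Type*) [TopologicalSpace A] [TopologicalSpace B]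
    (α : A → G) (hα : IsProperMap α) (hαH : ∀ a, α a ∈ H)
    (β : B → G ⧸ H) (hβ : IsProperMap β) :
    IsProperMap (fun p : A × B => s (β p.2) * α p.1) := by
  rw [isProperMap_iff_ultrafilter]
  have hcont : Continuous (fun p : A × B => s (β p.2) * α p.1) :=
    (hs_cont.comp (hβ.continuous.comp continuous_snd)).mul
      (hα.continuous.comp continuous_fst)
  refine ⟨hcont, ?_⟩
  intro 𝒰 g hg
  have heq : ∀ p : A × B, (QuotientGroup.mk (s (β p.2) * α p.1) : G ⧸ H) = β p.2 := by
    intro p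
    rw [QuotientGroup.mk_mul_of_mem _ (hαH p.1), hs_sect]
  -- β ∘ snd tends to π g
  have hβtend : Filter.Tendsto (fun p : A × B => β p.2) 𝒰 (𝓝 (QuotientGroup.mk g)) := by
    have : Filter.Tendsto (fun p : A × B => (QuotientGroup.mk (s (β p.2) * α p.1) : G ⧸ H))
        𝒰 (𝓝 (QuotientGroup.mk g)) :=
      (continuous_quotient_mk'.tendsto g).comp hg
    simpa only [heq] using this
  obtain ⟨b, hb_eq, hb_lim⟩ :=
    (isProperMap_iff_ultrafilter.mp hβ).2 (𝒰 := 𝒰.map Prod.snd)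
      (by rw [Ultrafilter.coe_map, Filter.tendsto_map'_iff]; exact hβtend)
  have hb_tend : Filter.Tendsto (fun p : A × B => p.2) 𝒰 (𝓝 b) := hb_lim
  -- s (β ∘ snd) tends to s (β b) = s (π g)
  have hs_tend : Filter.Tendsto (fun p : A × B => s (β p.2)) 𝒰 (𝓝 (s (β b))) :=
    ((hs_cont.comp hβ.continuous).tendsto b).comp hb_tend
  -- α ∘ fst tends to (s (β b))⁻¹ * g
  have hα_tend : Filter.Tendsto (fun p : A × B => α p.1) 𝒰 (𝓝 ((s (β b))⁻¹ * g)) := by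
    have : Filter.Tendsto (fun p : A × B => (s (β p.2))⁻¹ * (s (β p.2) * α p.1)) 𝒰
        (𝓝 ((s (β b))⁻¹ * g)) := (hs_tend.inv).mul hg
    simpa [mul_assoc] using this
  obtain ⟨a, ha_eq, ha_lim⟩ :=
    (isProperMap_iff_ultrafilter.mp hα).2 (𝒰 := 𝒰.map Prod.fst)
      (by rw [Ultrafilter.coe_map, Filter.tendsto_map'_iff]; exact hα_tend)
  refine ⟨(a, b), ?_, ?_⟩
  · simp only [ha_eq, hb_eq]
    group
  · rw [nhds_prod_eq]
    exact Filter.le_prod.2 ⟨ha_lim, hb_lim⟩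
end

section
/- Fix n ≥ 2 and work in ℝⁿ with standard basis e_1, …, e_n. Let Φ = {e_i − e_j : i ≠ j} (the root system of type A_{n−1}) and let α_m = e_m − e_{m+1} for 1 ≤ m ≤ n−1 be the simple roots. Then for every k with 1 ≤ k ≤ n−1 and every labeling L of {1, …, k} by the two symbols 'U' and 'D' with L(k) = 'D', there exist σ, μ ∈ Φ ∪ {0} such that (1) μ − σ = α_k; (2) for every φ ∈ Φ ∪ {0}, every m ≤ k with L(m) = 'D', and every real c > 0, σ − φ ≠ c·α_m; (3) for every φ ∈ Φ ∪ {0}, every m ≤ k with L(m) = 'U', and every real c > 0, φ − σ ≠ c·α_m. -/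
lemma keyD {ι : Type*} [DecidableEq ι] (p q u v s t : ι) (c : ℝ) (hc : 0 < c)
    (hpq : p ≠ q) (hps : p ≠ s) (hst : s ≠ t)
    (h : (Pi.single p 1 - Pi.single q 1 : ι → ℝ) - (Pi.single u 1 - Pi.single v 1)
      = c • (Pi.single s 1 - Pi.single t 1)) : q = t := by
  have H : ∀ x : ι, (if x = p then (1:ℝ) else 0) - (if x = q then 1 else 0)
      - ((if x = u then 1 else 0) - (if x = v then 1 else 0))
      = c * ((if x = s then 1 else 0) - (if x = t then 1 else 0)) := by
    intro x
    have := congrFun h x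
    simpa [Pi.single_apply] using this
  have Hp := H p
  rw [if_pos rfl, if_neg hpq, if_neg hps] at Hp
  have hpt : p ≠ t := by
    intro hpt
    rw [if_pos hpt] at Hp
    split_ifs at Hp <;> linarith
  rw [if_neg hpt] at Hp
  have hpu : p = u := by
    by_contra h1
    rw [if_neg h1] at Hp
    split_ifs at Hp <;> linarith
  subst hpu
  have Hs := H s
  rw [if_pos rfl, if_neg hst, if_neg (Ne.symm ‹p ≠ s›)] at Hs
  have hsvq : s = v ∧ s ≠ q := by
    constructor
    · by_contra h1
      rw [if_neg h1] at Hs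
      split_ifs at Hs <;> linarith
    · intro h2
      rw [if_pos h2] at Hs
      split_ifs at Hs <;> linarith
  have hc1 : c = 1 := by
    rw [if_pos hsvq.1, if_neg hsvq.2] at Hs; linarith
  have Ht := H t
  rw [if_pos rfl, if_neg (Ne.symm hst), if_neg (Ne.symm hpt), hc1] at Ht
  by_contra h2
  rw [if_neg fun h' => h2 h'.symm] at Ht
  split_ifs at Ht <;> linarith

lemma keyU {ι : Type*} [DecidableEq ι] (p q u v s t : ι) (c : ℝ) (hc : 0 < c)
    (hpq : p ≠ q) (hps : p ≠ s) (hst : s ≠ t)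
    (h : (Pi.single u 1 - Pi.single v 1 : ι → ℝ) - (Pi.single p 1 - Pi.single q 1)
      = c • (Pi.single s 1 - Pi.single t 1)) : s = q ∨ p = t := by
  have H : ∀ x : ι, (if x = u then (1:ℝ) else 0) - (if x = v then 1 else 0)
      - ((if x = p then 1 else 0) - (if x = q then 1 else 0))
      = c * ((if x = s then 1 else 0) - (if x = t then 1 else 0)) := by
    intro x
    have := congrFun h x
    simpa [Pi.single_apply] using this
  by_cases hpt : p = t
  · exact Or.inr hpt
  left
  have Hp := H p
  rw [if_pos rfl, if_neg hpq, if_neg hps, if_neg hpt] at Hp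
  have hpu : p = u := by
    by_contra h1
    rw [if_neg h1] at Hp
    split_ifs at Hp <;> linarith
  subst hpu
  have Hs := H s
  rw [if_pos rfl, if_neg hst, if_neg (Ne.symm ‹p ≠ s›)] at Hs
  by_contra hsq
  rw [if_neg hsq] at Hs
  split_ifs at Hs <;> linarith

/-- The type `A_{n-1}` case of the labeling lemma. In `ℝⁿ` with `Φ = {e_i - e_j : i ≠ j}` and
simple roots `α_m = e_m - e_{m+1}`, for every `k` and every labeling `L` of `{1, …, k}` by
'D'/'U' (`true`/`false`) with `L k = 'D'`, there are `σ, μ ∈ Φ ∪ {0}` with `μ - σ = α_k`,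
`σ - φ` never a positive multiple of a D-labeled simple root `α_m` (`m ≤ k`), and `φ - σ`
never a positive multiple of a U-labeled simple root `α_m` (`m ≤ k`). -/
theorem type_A_labeling_lemma (n : ℕ) (hn : 2 ≤ n)
    (e : Fin n → (Fin n → ℝ)) (he : e = fun i => Pi.single i 1)
    (Φ : Set (Fin n → ℝ)) (hΦ : Φ = {v | ∃ i j : Fin n, i ≠ j ∧ v = e i - e j})
    (α : Fin (n - 1) → (Fin n → ℝ))
    (hα : ∀ m : Fin (n - 1),
      α m = e ⟨(m : ℕ), by have := m.isLt; omega⟩ - e ⟨(m : ℕ) + 1, by have := m.isLt; omega⟩) :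
    ∀ (k : Fin (n - 1)) (L : Fin (n - 1) → Bool), L k = true →
      ∃ σ ∈ Φ ∪ {0}, ∃ μ ∈ Φ ∪ {0},
        μ - σ = α k ∧
        (∀ φ ∈ Φ ∪ {0}, ∀ m : Fin (n - 1), m ≤ k → L m = true →
          ∀ c : ℝ, 0 < c → σ - φ ≠ c • α m) ∧
        (∀ φ ∈ Φ ∪ {0}, ∀ m : Fin (n - 1), m ≤ k → L m = false →
          ∀ c : ℝ, 0 < c → φ - σ ≠ c • α m) := by
  intro k L hLk
  have hK : (k : ℕ) < n - 1 := k.isLt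
  have hK1 : (k : ℕ) + 1 < n := by omega
  have hKn : (k : ℕ) < n := by omega
  -- choose l minimal such that L is true on [l, k]
  have hex : ∃ l : ℕ, ∀ m : Fin (n - 1), l ≤ (m : ℕ) → m ≤ k → L m = true := by
    refine ⟨(k : ℕ), fun m h1 h2 => ?_⟩
    have : m = k := le_antisymm h2 (by exact Fin.le_def.mpr h1)
    rw [this]; exact hLk
  set l := Nat.find hex with hl_def
  have hPl : ∀ m : Fin (n - 1), l ≤ (m : ℕ) → m ≤ k → L m = true := Nat.find_spec hex
  have hl_le : l ≤ (k : ℕ) := Nat.find_min' hex (by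
    intro m h1 h2
    have : m = k := le_antisymm h2 (by exact Fin.le_def.mpr h1)
    rw [this]; exact hLk)
  have hprev : ∀ m : Fin (n - 1), (m : ℕ) + 1 = l → L m = false := by
    intro m hm1
    have hlt : (m : ℕ) < l := by omega
    have hnP := Nat.find_min hex hlt
    push_neg at hnP
    obtain ⟨m0, h1, h2, h3⟩ := hnP
    have hm0 : (m0 : ℕ) < l := by
      by_contra h4
      exact h3 (hPl m0 (by omega) h2)
    have : m0 = m := Fin.ext (by omega)
    rw [this] at h3
    simpa using h3
  have hln : l < n := by omega
  refine ⟨e ⟨(k : ℕ) + 1, hK1⟩ - e ⟨l, hln⟩, ?_,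
          e ⟨(k : ℕ), hKn⟩ - e ⟨l, hln⟩, ?_, ?_, ?_, ?_⟩
  · left
    rw [hΦ]
    exact ⟨_, _, by simp [Fin.ext_iff]; omega, rfl⟩
  · by_cases hlk : l = (k : ℕ)
    · right
      have : (⟨(k : ℕ), hKn⟩ : Fin n) = ⟨l, hln⟩ := Fin.ext (by simp [hlk])
      simp [this]
    · left
      rw [hΦ]
      exact ⟨_, _, by simp [Fin.ext_iff]; omega, rfl⟩
  · rw [hα k]
    abel
  · -- D condition
    intro φ hφ m hmk hLm c hc hEq
    have hmK : (m : ℕ) ≤ (k : ℕ) := Fin.le_def.mp hmk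
    obtain ⟨u, v, hφeq⟩ : ∃ u v : Fin n, φ = e u - e v := by
      rcases hφ with hφ | hφ
      · rw [hΦ] at hφ
        obtain ⟨i, j, _, hij⟩ := hφ
        exact ⟨i, j, hij⟩
      · refine ⟨⟨0, by omega⟩, ⟨0, by omega⟩, ?_⟩
        simp only [Set.mem_singleton_iff] at hφ
        rw [hφ]; simp
    subst hφeq
    rw [hα m] at hEq
    simp only [he] at hEq
    have hq := keyD ⟨(k : ℕ) + 1, hK1⟩ ⟨l, hln⟩ u v
        ⟨(m : ℕ), by omega⟩ ⟨(m : ℕ) + 1, by have := m.isLt; omega⟩ c hc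
        (by simp [Fin.ext_iff]; omega) (by simp [Fin.ext_iff]; omega)
        (by simp [Fin.ext_iff]) hEq
    have hl1 : (m : ℕ) + 1 = l := by
      simpa [Fin.ext_iff] using hq.symm
    have := hprev m hl1
    rw [hLm] at this
    exact absurd this (by simp)
  · -- U condition
    intro φ hφ m hmk hLm c hc hEq
    have hmK : (m : ℕ) ≤ (k : ℕ) := Fin.le_def.mp hmk
    obtain ⟨u, v, hφeq⟩ : ∃ u v : Fin n, φ = e u - e v := by
      rcases hφ with hφ | hφ
      · rw [hΦ] at hφ
        obtain ⟨i, j, _, hij⟩ := hφ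
        exact ⟨i, j, hij⟩
      · refine ⟨⟨0, by omega⟩, ⟨0, by omega⟩, ?_⟩
        simp only [Set.mem_singleton_iff] at hφ
        rw [hφ]; simp
    subst hφeq
    rw [hα m] at hEq
    simp only [he] at hEq
    have hq := keyU ⟨(k : ℕ) + 1, hK1⟩ ⟨l, hln⟩ u v
        ⟨(m : ℕ), by omega⟩ ⟨(m : ℕ) + 1, by have := m.isLt; omega⟩ c hc
        (by simp [Fin.ext_iff]; omega) (by simp [Fin.ext_iff]; omega)
        (by simp [Fin.ext_iff]) hEq
    rcases hq with hq | hq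
    · have hml : (m : ℕ) = l := by simpa [Fin.ext_iff] using hq
      have := hPl m (by omega) hmk
      rw [hLm] at this
      exact absurd this (by simp)
    · have hmkk : m = k := Fin.ext (by simp [Fin.ext_iff] at hq; omega)
      rw [hmkk, hLk] at hLm
      exact absurd hLm (by simp)
end
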